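/- Let λ ⊆ l×k be a partition with Frobenius notation λ = (α₁,…,α_t | β₁,…,β_t), so t = diag(λ) is the side of the largest square contained in λ. For any hook partition (α|β) ⊆ l×k and any partition ν ⊆ l×k, every partition ρ with ρ₁ ≤ k, c^ρ_{(α|β),ν} ≠ 0 satisfies |ρ| − |core_n(ρ)| ≤ n, i.e., at most one n-rim hook can be removed from ρ (r_n(ρ) ≤ 1), where n = l+k. -/
import Mathlib


open YoungDiagram

namespace QCGrass

/-- The rectangular Young diagram with `m` rows of length `M`. -/
def rect (m M : ℕ) : YoungDiagram :=
  ⟨Finset.range m ×ˢ Finset.range M, by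
    intro a b hba ha
    simp only [Finset.coe_product, Set.mem_prod, Finset.mem_coe, Finset.mem_range] at *
    exact ⟨lt_of_le_of_lt hba.1 ha.1, lt_of_le_of_lt hba.2 ha.2⟩⟩

/-- The cells of the skew shape `nu / lam`. -/
def skewCells (lam nu : YoungDiagram) : Finset (ℕ × ℕ) := nu.cells \ lam.cells

/-- `T` is a Littlewood–Richardson skew tableau of shape `nu / lam` and content `mu`:
entries (valued in `{1, 2, …}`, with `0` meaning "no entry") are supported exactly on the
skew shape `nu / lam`, weakly increase along rows, strictly increase down columns, the number
of entries equal to `r + 1` is the `r`-th row length of `mu`, and the reverse reading word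
(rows read right to left, top to bottom) is a lattice word. -/
def IsLRTableau (lam mu nu : YoungDiagram) (T : ℕ × ℕ → ℕ) : Prop :=
  lam ≤ nu ∧
  (∀ p : ℕ × ℕ, 1 ≤ T p ↔ p ∈ skewCells lam nu) ∧
  (∀ i j j' : ℕ, j ≤ j' → (i, j) ∈ skewCells lam nu → (i, j') ∈ skewCells lam nu →
      T (i, j) ≤ T (i, j')) ∧
  (∀ i i' j : ℕ, i < i' → (i, j) ∈ skewCells lam nu → (i', j) ∈ skewCells lam nu →
      T (i, j) < T (i', j)) ∧
  (∀ r : ℕ, ((skewCells lam nu).filter (fun p => T p = r + 1)).card = mu.rowLen r) ∧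
  (∀ i j r : ℕ,
      ((skewCells lam nu).filter
        (fun p => T p = r + 2 ∧ (p.1 < i ∨ (p.1 = i ∧ j ≤ p.2)))).card ≤
      ((skewCells lam nu).filter
        (fun p => T p = r + 1 ∧ (p.1 < i ∨ (p.1 = i ∧ j ≤ p.2)))).card)

/-- The Littlewood–Richardson coefficient `c^nu_{lam, mu}`, defined as the number of
Littlewood–Richardson skew tableaux of shape `nu / lam` and content `mu`. -/
noncomputable def lrCoeff (lam mu nu : YoungDiagram) : ℕ :=
  Nat.card {T : ℕ × ℕ → ℕ // IsLRTableau lam mu nu T}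

/-- The set of boxes (in `0`-indexed matrix coordinates) of `mu` rotated 180 degrees and
placed in the lower-right corner of the `l × k` rectangle. -/
def rotSet (l k : ℕ) (mu : YoungDiagram) : Set (ℕ × ℕ) :=
  {p | p.1 < l ∧ p.2 < k ∧ k - mu.rowLen (l - 1 - p.1) ≤ p.2}

/-- Two boxes are adjacent when they share an edge. -/
def Adjacent (p q : ℕ × ℕ) : Prop :=
  (p.1 = q.1 ∧ (p.2 = q.2 + 1 ∨ q.2 = p.2 + 1)) ∨
  (p.2 = q.2 ∧ (p.1 = q.1 + 1 ∨ q.1 = p.1 + 1))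

/-- `mu` is obtained from `lam` by removing a legal `n`-rim hook: `mu ⊆ lam` (so the removal
leaves a Young diagram), the removed set has `n` boxes, is edge-connected, and contains
no `2 × 2` square. -/
def IsRimHookRemoval (n : ℕ) (lam mu : YoungDiagram) : Prop :=
  mu ≤ lam ∧ (skewCells mu lam).card = n ∧
  (∀ p ∈ skewCells mu lam, ∀ q ∈ skewCells mu lam,
    Relation.ReflTransGen
      (fun a b => a ∈ skewCells mu lam ∧ b ∈ skewCells mu lam ∧ Adjacent a b) p q) ∧
  ¬ ∃ i j : ℕ, (i, j) ∈ skewCells mu lam ∧ (i + 1, j) ∈ skewCells mu lam ∧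
      (i, j + 1) ∈ skewCells mu lam ∧ (i + 1, j + 1) ∈ skewCells mu lam

/-- One legal `n`-rim hook removal step. -/
def RimStep (n : ℕ) (lam mu : YoungDiagram) : Prop := IsRimHookRemoval n lam mu

/-- A diagram is an `n`-core when no legal `n`-rim hook can be removed from it. -/
def IsCore (n : ℕ) (t : YoungDiagram) : Prop := ¬ ∃ s, RimStep n t s

/-- `ReachesIn n m a b` : `b` is obtained from `a` by `m` successive legal `n`-rim hook
removals. -/
def ReachesIn (n : ℕ) : ℕ → YoungDiagram → YoungDiagram → Prop
  | 0 => fun a b => a = b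
  | m + 1 => fun a b => ∃ c, RimStep n a c ∧ ReachesIn n m c b

/-- The width (number of occupied columns) of the strip removed in passing
from `lam` to `mu`. -/
def hookWidth (lam mu : YoungDiagram) : ℕ := ((skewCells mu lam).image Prod.snd).card

/-- The height (number of occupied rows) of the strip removed in passing
from `lam` to `mu`. -/
def hookHeight (lam mu : YoungDiagram) : ℕ := ((skewCells mu lam).image Prod.fst).card

/-- `ReachesInSign n k m s a b` : `b` is obtained from `a` by `m` successive legal `n`-rim
hook removals, and `s = ∏ (-1)^(k - width(R_i))` over the removed hooks `R_i`. -/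
def ReachesInSign (n k : ℕ) : ℕ → ℤ → YoungDiagram → YoungDiagram → Prop
  | 0 => fun s a b => a = b ∧ s = 1
  | m + 1 => fun s a b => ∃ c s', RimStep n a c ∧ ReachesInSign n k m s' c b ∧
      s = (-1) ^ (k - hookWidth a c) * s'

/-- `diagLen lam` is the number of diagonal boxes of `lam`, i.e. the side length of the
largest square contained in `lam`. -/
def diagLen (lam : YoungDiagram) : ℕ := (lam.cells.filter fun p => p.1 = p.2).card

/-- A `d × d` square of boxes fits inside `lam ∩ rotate(mu)` within the `l × k` rectangle. -/
def SquareFits (l k : ℕ) (lam mu : YoungDiagram) (d : ℕ) : Prop :=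
  ∃ i j : ℕ, ∀ i' j' : ℕ, i ≤ i' → i' < i + d → j ≤ j' → j' < j + d →
    (i', j') ∈ lam.cells ∧ (i', j') ∈ rotSet l k mu

/-- The triple product `σ_lam · σ_mu · σ_nu` is nonzero in `H^*(Gr(l, l+k))`: some `rho ⊆ l × k`
has `c^rho_{lam,mu} ≠ 0` and `rho` is disjoint from `rotate(nu)`. -/
def TripleNonzero (l k : ℕ) (lam mu nu : YoungDiagram) : Prop :=
  ∃ rho, rho ≤ rect l k ∧ lrCoeff lam mu rho ≠ 0 ∧
    ∀ i, i < l → rho.rowLen i + nu.rowLen (l - 1 - i) ≤ k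


lemma mem_rect {l k : ℕ} {p : ℕ × ℕ} : p ∈ rect l k ↔ p.1 < l ∧ p.2 < k := by
  cases p with
  | mk a b =>
    show (a, b) ∈ (rect l k).cells ↔ _
    simp [rect, Finset.mem_product]


lemma le_mem {μ ν : YoungDiagram} (hle : μ ≤ ν) {p : ℕ × ℕ} (hp : p ∈ μ) : p ∈ ν :=
  (YoungDiagram.mem_cells _).1 (hle ((YoungDiagram.mem_cells _).2 hp))

lemma rowLen_le_of_le {μ ν : YoungDiagram} (hle : μ ≤ ν) (i : ℕ) : μ.rowLen i ≤ ν.rowLen i := by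
  by_contra hc
  push_neg at hc
  have h1 : (i, ν.rowLen i) ∈ μ := YoungDiagram.mem_iff_lt_rowLen.2 hc
  exact absurd (YoungDiagram.mem_iff_lt_rowLen.1 (le_mem hle h1)) (lt_irrefl _)

lemma mem_skew {μ ν : YoungDiagram} {p : ℕ × ℕ} : p ∈ skewCells μ ν ↔ p ∈ ν ∧ p ∉ μ := by
  simp [skewCells, Finset.mem_sdiff, YoungDiagram.mem_cells]

lemma mem_skew' {μ ν : YoungDiagram} {i j : ℕ} :
    (i, j) ∈ skewCells μ ν ↔ μ.rowLen i ≤ j ∧ j < ν.rowLen i := by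
  rw [mem_skew, YoungDiagram.mem_iff_lt_rowLen, YoungDiagram.mem_iff_lt_rowLen]
  omega

def Xb (N : ℕ) (lam : YoungDiagram) (i : ℕ) : ℕ := lam.rowLen i + (N - 1 - i)

def Bset (N : ℕ) (lam : YoungDiagram) : Finset ℕ := (Finset.range N).image (Xb N lam)

lemma Xb_strict {N : ℕ} (lam : YoungDiagram) {i j : ℕ} (hij : i < j) (hj : j < N) :
    Xb N lam j < Xb N lam i := by
  have := lam.rowLen_anti i j hij.le
  unfold Xb; omega

lemma rimstep_beta {n N : ℕ} {lam mu : YoungDiagram} (hn : 0 < n)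
    (hstep : RimStep n lam mu) (hN : lam.rowLen N = 0) :
    ∃ x, x ∈ Bset N lam ∧ n ≤ x ∧ x - n ∉ Bset N lam ∧
      Bset N mu = insert (x - n) ((Bset N lam).erase x) := by
  obtain ⟨hle, hcard, hconn, h2x2⟩ := hstep
  set S := skewCells mu lam with hSdef
  have hmono : ∀ i, mu.rowLen i ≤ lam.rowLen i := rowLen_le_of_le hle
  have hmem : ∀ i j, (i, j) ∈ S ↔ mu.rowLen i ≤ j ∧ j < lam.rowLen i := fun i j => mem_skew'
  have hSne : S.Nonempty := Finset.card_pos.1 (by rw [hcard]; exact hn)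
  have hIne : (S.image Prod.fst).Nonempty := hSne.image _
  set i0 := (S.image Prod.fst).min' hIne with hi0def
  set i1 := (S.image Prod.fst).max' hIne with hi1def
  have hrange : ∀ p ∈ S, i0 ≤ p.1 ∧ p.1 ≤ i1 := fun p hp =>
    ⟨Finset.min'_le _ _ (Finset.mem_image_of_mem _ hp),
     Finset.le_max' _ _ (Finset.mem_image_of_mem _ hp)⟩
  obtain ⟨p0, hp0S, hp0⟩ := Finset.mem_image.1 ((S.image Prod.fst).min'_mem hIne)
  obtain ⟨q1, hq1S, hq1⟩ := Finset.mem_image.1 ((S.image Prod.fst).max'_mem hIne)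
  rw [← hi0def] at hp0
  rw [← hi1def] at hq1
  have hii : i0 ≤ i1 := by
    have := hrange p0 hp0S; omega
  -- no 2x2 square: uniform inequality
  have hK : ∀ i, lam.rowLen (i + 1) ≤ mu.rowLen i + 1 := by
    intro i
    by_contra hc
    push_neg at hc
    have ha1 := lam.rowLen_anti i (i + 1) (by omega)
    have ha2 := mu.rowLen_anti i (i + 1) (by omega)
    exact h2x2 ⟨i, mu.rowLen i,
      (hmem _ _).2 (by omega), (hmem _ _).2 (by omega),
      (hmem _ _).2 (by omega), (hmem _ _).2 (by omega)⟩
  -- crossing lemma from connectivity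
  have hcross : ∀ r, i0 ≤ r → r < i1 → ∃ c, (r, c) ∈ S ∧ (r + 1, c) ∈ S := by
    intro r hr1 hr2
    have hpath := hconn p0 hp0S q1 hq1S
    have key : ∀ a b : ℕ × ℕ,
        Relation.ReflTransGen (fun a b => a ∈ S ∧ b ∈ S ∧ Adjacent a b) a b →
        a.1 ≤ r → r < b.1 → ∃ c, (r, c) ∈ S ∧ (r + 1, c) ∈ S := by
      intro a b hab
      induction hab with
      | refl => intro h1 h2; omega
      | @tail b' c' _ hstep ih =>
        intro h1 h2
        obtain ⟨hb'S, hc'S, hadj⟩ := hstep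
        by_cases hc : r < b'.1
        · exact ih h1 hc
        · push_neg at hc
          rcases hadj with ⟨hrow, _⟩ | ⟨hcol, hv⟩
          · omega
          · have hb1 : b'.1 = r := by omega
            have hc1 : c'.1 = r + 1 := by omega
            refine ⟨b'.2, ?_, ?_⟩
            · rw [show (r, b'.2) = b' from Prod.ext hb1.symm rfl]; exact hb'S
            · rw [show (r + 1, b'.2) = c' from Prod.ext hc1.symm hcol]; exact hc'S
    exact key p0 q1 hpath (by omega) (by omega)
  have hLeq : ∀ r, i0 ≤ r → r < i1 → mu.rowLen r + 1 = lam.rowLen (r + 1) := by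
    intro r h1 h2
    obtain ⟨c, hc1, hc2⟩ := hcross r h1 h2
    rw [hmem] at hc1 hc2
    have := hK r
    omega
  have hout : ∀ i, i < i0 ∨ i1 < i → mu.rowLen i = lam.rowLen i := by
    intro i hi
    by_contra hne
    have hlt : mu.rowLen i < lam.rowLen i := lt_of_le_of_ne (hmono i) hne
    have hiS : (i, mu.rowLen i) ∈ S := (hmem _ _).2 ⟨le_refl _, hlt⟩
    have := hrange _ hiS
    simp at this
    omega
  have hocc1 : mu.rowLen i1 < lam.rowLen i1 := by
    have h := (hmem q1.1 q1.2).1 hq1S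
    rw [hq1] at h
    omega
  have hi1N : i1 < N := by
    by_contra hc
    push_neg at hc
    have := lam.rowLen_anti N i1 hc
    omega
  -- fiber counting
  have hfiber : ∀ i, (S.filter (fun p => p.1 = i)).card = lam.rowLen i - mu.rowLen i := by
    intro i
    have heq : S.filter (fun p => p.1 = i)
        = (Finset.Ico (mu.rowLen i) (lam.rowLen i)).image (fun j => (i, j)) := by
      ext ⟨x, y⟩
      simp only [Finset.mem_filter, Finset.mem_image, Finset.mem_Ico]
      constructor
      · rintro ⟨hxy, rfl⟩
        exact ⟨y, (hmem _ _).1 hxy, rfl⟩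
      · rintro ⟨j, hj, hj2⟩
        obtain ⟨rfl, rfl⟩ := Prod.mk.injEq _ _ _ _ ▸ hj2
        exact ⟨(hmem _ _).2 hj, rfl⟩
    rw [heq, Finset.card_image_of_injective _ (fun a b hab => by
      simpa using hab), Nat.card_Ico]
  have hsum : ∑ i ∈ Finset.Icc i0 i1, (lam.rowLen i - mu.rowLen i) = n := by
    rw [← hcard]
    rw [Finset.card_eq_sum_card_fiberwise (f := Prod.fst) (t := Finset.Icc i0 i1)
      (fun p hp => Finset.mem_Icc.2 (hrange p hp))]
    exact Finset.sum_congr rfl fun i _ => (hfiber i).symm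
  -- telescoping
  have htele : ∀ d j, j + d = i1 → i0 ≤ j →
      (∑ i ∈ Finset.Icc j i1, (lam.rowLen i - mu.rowLen i)) + mu.rowLen i1 + j
        = lam.rowLen j + i1 := by
    intro d
    induction d with
    | zero =>
      intro j hj _
      have hji : j = i1 := by omega
      rw [hji, Finset.Icc_self, Finset.sum_singleton]
      have := hmono i1
      omega
    | succ d ih =>
      intro j hj hij
      have hjlt : j < i1 := by omega
      have hsplit : Finset.Icc j i1 = insert j (Finset.Icc (j + 1) i1) := by
        ext x; simp only [Finset.mem_Icc, Finset.mem_insert]; omega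
      rw [hsplit, Finset.sum_insert (by simp only [Finset.mem_Icc]; omega)]
      have hIH := ih (j + 1) (by omega) (by omega)
      have hleq := hLeq j hij hjlt
      have := hmono j
      omega
  have hdagger : n + mu.rowLen i1 + i0 = lam.rowLen i0 + i1 := by
    have := htele (i1 - i0) i0 (by omega) le_rfl
    rw [hsum] at this
    exact this
  refine ⟨Xb N lam i0, Finset.mem_image.2 ⟨i0, Finset.mem_range.2 (by omega), rfl⟩, ?_, ?_, ?_⟩
  · unfold Xb; omega
  · -- x - n ∉ Bset N lam ; note x - n = Xb N mu i1
    have hxmn : Xb N lam i0 - n = Xb N mu i1 := by unfold Xb; omega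
    rw [hxmn]
    intro hmem'
    obtain ⟨i, hiN, hXi⟩ := Finset.mem_image.1 hmem'
    rw [Finset.mem_range] at hiN
    rcases le_or_gt i i1 with hle' | hlt'
    · have h1 : Xb N lam i1 ≤ Xb N lam i := by
        rcases eq_or_lt_of_le hle' with rfl | h
        · exact le_refl _
        · exact (Xb_strict lam h hi1N).le
      have h2 : Xb N mu i1 < Xb N lam i1 := by unfold Xb; omega
      omega
    · have h1 : Xb N lam i = Xb N mu i := by unfold Xb; rw [hout i (Or.inr hlt')]
      have h2 := Xb_strict mu hlt' hiN
      omega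
  · -- the multiset equation
    have hxmn : Xb N lam i0 - n = Xb N mu i1 := by unfold Xb; omega
    ext y
    simp only [Bset, Finset.mem_insert, Finset.mem_erase, Finset.mem_image, Finset.mem_range]
    constructor
    · rintro ⟨i, hiN, rfl⟩
      by_cases h1 : i < i0
      · refine Or.inr ⟨?_, i, hiN, ?_⟩
        · have he : Xb N mu i = Xb N lam i := by unfold Xb; rw [hout i (Or.inl h1)]
          rw [he]
          exact (Xb_strict lam h1 (by omega)).ne'
        · unfold Xb; rw [hout i (Or.inl h1)]
      · push_neg at h1
        by_cases h2 : i1 < i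
        · refine Or.inr ⟨?_, i, hiN, ?_⟩
          · have he : Xb N mu i = Xb N lam i := by unfold Xb; rw [hout i (Or.inr h2)]
            rw [he]
            exact ne_of_lt (Xb_strict lam (by omega) hiN)
          · unfold Xb; rw [hout i (Or.inr h2)]
        · push_neg at h2
          by_cases h3 : i = i1
          · subst h3; exact Or.inl hxmn.symm
          · have hilt : i < i1 := by omega
            have heq2 : Xb N mu i = Xb N lam (i + 1) := by
              have := hLeq i h1 hilt
              unfold Xb; omega
            refine Or.inr ⟨?_, i + 1, by omega, heq2.symm⟩
            rw [heq2]
            exact ne_of_lt (Xb_strict lam (by omega) (by omega))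
    · rintro (rfl | ⟨hne, i, hiN, rfl⟩)
      · exact ⟨i1, by omega, hxmn.symm⟩
      · have hne_i0 : i ≠ i0 := fun h => hne (by rw [h])
        by_cases h1 : i < i0
        · exact ⟨i, hiN, by unfold Xb; rw [hout i (Or.inl h1)]⟩
        · push_neg at h1
          by_cases h2 : i1 < i
          · exact ⟨i, hiN, by unfold Xb; rw [hout i (Or.inr h2)]⟩
          · push_neg at h2
            have hgt : i0 < i := by omega
            refine ⟨i - 1, by omega, ?_⟩
            have hl2 := hLeq (i - 1) (by omega) (by omega)
            rw [show i - 1 + 1 = i from by omega] at hl2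
            unfold Xb
            omega

lemma no_two {l k b : ℕ} {rho sigma sigma2 : YoungDiagram}
    (hb : b + 1 ≤ l) (hk : 1 ≤ k)
    (C1 : ∀ i, rho.rowLen i ≤ k)
    (C2 : ∀ i, l + 1 ≤ i → rho.rowLen i ≤ 1)
    (C3 : rho.rowLen (b + l + 1) = 0)
    (h1 : RimStep (l + k) rho sigma) (h2 : RimStep (l + k) sigma sigma2) : False := by
  set n := l + k with hndef
  set N := b + l + 1 with hNdef
  have hn : 0 < n := by omega
  have hsle : sigma ≤ rho := h1.1
  have hsN : sigma.rowLen N = 0 := by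
    have := rowLen_le_of_le hsle N
    omega
  obtain ⟨x1, hx1B, hx1n, hx1h, hBs⟩ := rimstep_beta hn h1 C3
  obtain ⟨x2, hx2B, hx2n, hx2h, _⟩ := rimstep_beta hn h2 hsN
  have hboundR : ∀ y ∈ Bset N rho, y ≤ n + b := by
    intro y hy
    obtain ⟨i, hi, rfl⟩ := Finset.mem_image.1 hy
    rw [Finset.mem_range] at hi
    have := C1 i
    unfold Xb
    omega
  have hx1b : x1 ≤ n + b := hboundR x1 hx1B
  have hx2R : x2 ∈ Bset N rho ∧ x2 ≠ x1 := by
    rw [hBs] at hx2B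
    rcases Finset.mem_insert.1 hx2B with heq | hmem'
    · omega
    · exact ⟨Finset.mem_of_mem_erase hmem', Finset.ne_of_mem_erase hmem'⟩
  have hx2b : x2 ≤ n + b := hboundR x2 hx2R.1
  have hx2hR : x2 - n ∉ Bset N rho := by
    intro hc
    apply hx2h
    rw [hBs]
    exact Finset.mem_insert_of_mem (Finset.mem_erase.2 ⟨by omega, hc⟩)
  rcases Nat.eq_zero_or_pos b with rfl | hbpos
  · -- b = 0 : x1, x2 ∈ [n, n], distinct
    omega
  · set D := (Finset.Icc (l + 1) (l + b)).image (Xb N rho) with hDdef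
    have hcardD : D.card = b := by
      rw [hDdef, Finset.card_image_of_injOn, Nat.card_Icc]
      · omega
      · intro i hi j hj hij
        rw [Finset.mem_coe, Finset.mem_Icc] at hi hj
        rcases lt_trichotomy i j with h | h | h
        · exact absurd hij (Xb_strict rho h (by omega)).ne'
        · exact h
        · exact absurd hij (Xb_strict rho h (by omega)).ne
    have hDsub : D ⊆ ((Finset.Icc 0 b).erase (x1 - n)).erase (x2 - n) := by
      intro y hy
      rw [hDdef, Finset.mem_image] at hy
      obtain ⟨i, hi, rfl⟩ := hy
      rw [Finset.mem_Icc] at hi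
      have hXb : Xb N rho i ≤ b := by
        have := C2 i hi.1
        unfold Xb
        omega
      have hyB : Xb N rho i ∈ Bset N rho :=
        Finset.mem_image.2 ⟨i, Finset.mem_range.2 (by omega), rfl⟩
      refine Finset.mem_erase.2 ⟨fun heq => hx2hR (heq ▸ hyB), Finset.mem_erase.2
        ⟨fun heq => hx1h (heq ▸ hyB), Finset.mem_Icc.2 ⟨Nat.zero_le _, hXb⟩⟩⟩
    have hle2 := Finset.card_le_card hDsub
    rw [Finset.card_erase_of_mem, Finset.card_erase_of_mem, Nat.card_Icc] at hle2
    · omega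
    · exact Finset.mem_Icc.2 ⟨Nat.zero_le _, by omega⟩
    · exact Finset.mem_erase.2 ⟨by omega, Finset.mem_Icc.2 ⟨Nat.zero_le _, by omega⟩⟩

/-- If `h = (a | b) = (a+1, 1^b)` is a hook partition contained in `l × k`,
`nu ⊆ l × k`, and `rho` has first part at most `k` with `c^rho_{h, nu} ≠ 0`, then at most
one `(l+k)`-rim hook can be removed from `rho` in its reduction to the `(l+k)`-core, i.e.
`r_n(rho) ≤ 1` (equivalently `|rho| - |core_n(rho)| ≤ n`). -/
theorem hook_times_class_degree_le_one (l k a b : ℕ) (hl : 1 ≤ l) (hk : 1 ≤ k)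
    (h nu rho : YoungDiagram)
    (hhook : ∀ i : ℕ, h.rowLen i = if i = 0 then a + 1 else if i ≤ b then 1 else 0)
    (hhk : h ≤ rect l k) (hnu : nu ≤ rect l k) (hrho : rho.rowLen 0 ≤ k)
    (hlr : lrCoeff h nu rho ≠ 0) :
    ∀ (m : ℕ) (tau : YoungDiagram), ReachesIn (l + k) m rho tau → IsCore (l + k) tau →
      m ≤ 1 ∧ rho.card - tau.card ≤ l + k := by
  -- extract an LR tableau
  have hT : ∃ T, IsLRTableau h nu rho T := by
    by_contra hc
    push_neg at hc
    apply hlr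
    have hempty : IsEmpty {T : ℕ × ℕ → ℕ // IsLRTableau h nu rho T} :=
      ⟨fun ⟨T, hT⟩ => hc T hT⟩
    simp [lrCoeff, Nat.card_of_isEmpty]
  obtain ⟨T, hTle', hsupp, hrowW, hcolS, hcontent, hlat⟩ := hT
  -- b + 1 ≤ l
  have hbl : b + 1 ≤ l := by
    by_contra hc
    push_neg at hc
    have h1 : (l, 0) ∈ h := by
      rw [YoungDiagram.mem_iff_lt_rowLen, hhook]
      split_ifs <;> omega
    have h2 := mem_rect.1 (le_mem hhk h1)
    simp at h2
  -- nu has at most l rows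
  have hnurow : ∀ r, l ≤ r → nu.rowLen r = 0 := by
    intro r hr
    by_contra hc
    have h1 : (r, 0) ∈ nu := YoungDiagram.mem_iff_lt_rowLen.2 (by omega)
    have h2 := mem_rect.1 (le_mem hnu h1)
    omega
  -- entries of T are at most l
  have hTle : ∀ p ∈ skewCells h rho, T p ≤ l := by
    intro p hp
    by_contra hc
    push_neg at hc
    have h1 : 1 ≤ T p := (hsupp p).2 hp
    have h2 := hcontent (T p - 1)
    rw [hnurow (T p - 1) (by omega)] at h2
    have h3 : p ∈ (skewCells h rho).filter (fun q => T q = (T p - 1) + 1) :=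
      Finset.mem_filter.2 ⟨hp, by omega⟩
    rw [Finset.card_eq_zero.1 h2] at h3
    simp at h3
  -- strictly increasing chains down columns
  have hchain : ∀ j i0 d, (∀ e, e ≤ d → (i0 + e, j) ∈ skewCells h rho) →
      1 + d ≤ T (i0 + d, j) := by
    intro j i0 d
    induction d with
    | zero =>
      intro hall
      exact (hsupp (i0 + 0, j)).2 (hall 0 le_rfl)
    | succ d ih =>
      intro hall
      have h1 := ih (fun e he => hall e (by omega))
      have h2 : T (i0 + d, j) < T (i0 + (d + 1), j) :=
        hcolS (i0 + d) (i0 + (d + 1)) j (by omega) (hall d (by omega)) (hall (d + 1) le_rfl)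
      omega
  -- constraint C2 : rows l+1 and beyond have length at most 1
  have C2 : ∀ i, l + 1 ≤ i → rho.rowLen i ≤ 1 := by
    intro i hi
    by_contra hc
    push_neg at hc
    have hcell : (i, 1) ∈ rho := YoungDiagram.mem_iff_lt_rowLen.2 (by omega)
    have hall : ∀ e, e ≤ l → (1 + e, 1) ∈ skewCells h rho := by
      intro e he
      rw [mem_skew]
      refine ⟨rho.up_left_mem (by omega) le_rfl hcell, ?_⟩
      rw [YoungDiagram.mem_iff_lt_rowLen, hhook]
      split_ifs <;> omega
    have hch := hchain 1 1 l hall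
    have hbd := hTle (1 + l, 1) (hall l le_rfl)
    omega
  -- constraint C3 : rho has at most b + l + 1 rows
  have C3 : rho.rowLen (b + l + 1) = 0 := by
    by_contra hc
    have hcell : (b + l + 1, 0) ∈ rho := YoungDiagram.mem_iff_lt_rowLen.2 (by omega)
    have hall : ∀ e, e ≤ l → (b + 1 + e, 0) ∈ skewCells h rho := by
      intro e he
      rw [mem_skew]
      refine ⟨rho.up_left_mem (by omega) le_rfl hcell, ?_⟩
      rw [YoungDiagram.mem_iff_lt_rowLen, hhook]
      split_ifs <;> omega
    have hch := hchain 0 (b + 1) l hall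
    have hbd := hTle (b + 1 + l, 0) (hall l le_rfl)
    omega
  have C1 : ∀ i, rho.rowLen i ≤ k := fun i =>
    le_trans (rho.rowLen_anti 0 i (Nat.zero_le _)) hrho
  intro m tau hreach _
  have hm : m ≤ 1 := by
    by_contra hc
    push_neg at hc
    obtain ⟨m', rfl⟩ : ∃ m', m = m' + 2 := ⟨m - 2, by omega⟩
    obtain ⟨c1, hs1, hre⟩ := hreach
    obtain ⟨c2, hs2, _⟩ := hre
    exact no_two hbl hk C1 C2 C3 hs1 hs2
  refine ⟨hm, ?_⟩
  interval_cases m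
  · have heq : rho = tau := hreach
    rw [heq]
    simp
  · obtain ⟨c, hs, heq⟩ := hreach
    have heq' : c = tau := heq
    subst heq'
    obtain ⟨hle2, hcard2, -, -⟩ := hs
    have hsub : c.cells ⊆ rho.cells := hle2
    have := Finset.card_sdiff_of_subset hsub
    have hck : (skewCells c rho).card = rho.cells.card - c.cells.card := by
      rw [skewCells] at *
      omega
    show rho.cells.card - c.cells.card ≤ l + k
    omega


end QCGrass
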